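/- arXiv:2412.00986 — 5 statements merged into one kernel-verified Lean document; each statement's English description precedes it below -/
import Mathlib

section
/- Let ν : [0,∞) → [0,∞) be a càdlàg nondecreasing function with ν(0) ≥ 0 and ∫_{[0,∞)} e^(-ρt) dν(t) < ∞ for some ρ > 0, and let Y(t) = e^(μt) with μ ≤ 0. Define ν̂(t) = ∫_{[0,t]} Y(s)^(-1) dν(s). Then ∫₀^∞ e^(-ρs) Y(s) ν̂(s) ds ≤ ρ^(-1) ν(0) + ρ^(-1) ∫_{[0,∞)} e^(-ρs) dν(s) < ∞, and consequently lim_{t→∞} e^(-ρt) Y(t) ν̂(t) = 0. -/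
open Real MeasureTheory Set Filter

/-- Discounted admissible controls: if ν is càdlàg nondecreasing (a Stieltjes function)
with ν(0) ≥ 0 and finite discounted total mass, and Y(t) = e^(μt) with μ ≤ 0,
ν̂(t) = ∫_{[0,t]} Y(s)⁻¹ dν(s), then ∫₀^∞ e^(-ρs) Y(s) ν̂(s) ds is finite, bounded by
ρ⁻¹ν(0) + ρ⁻¹∫ e^(-ρs) dν(s), and e^(-ρt) Y(t) ν̂(t) → 0. -/
theorem stmt2 (ρ μ : ℝ) (hρ : 0 < ρ) (hμ : μ ≤ 0)
    (ν : StieltjesFunction ℝ) (hν0 : 0 ≤ ν 0)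
    (hint : MeasureTheory.IntegrableOn (fun t : ℝ => Real.exp (-ρ * t)) (Set.Ici 0) ν.measure)
    (νhat : ℝ → ℝ)
    (hνhat : ∀ t : ℝ, νhat t = ∫ s in Set.Icc (0:ℝ) t, Real.exp (-μ * s) ∂ν.measure) :
    MeasureTheory.IntegrableOn
      (fun s : ℝ => Real.exp (-ρ * s) * Real.exp (μ * s) * νhat s) (Set.Ioi 0) ∧
    (∫ s in Set.Ioi (0:ℝ), Real.exp (-ρ * s) * Real.exp (μ * s) * νhat s) ≤
      ρ⁻¹ * ν 0 + ρ⁻¹ * ∫ t in Set.Ici (0:ℝ), Real.exp (-ρ * t) ∂ν.measure ∧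
    Filter.Tendsto (fun t : ℝ => Real.exp (-ρ * t) * Real.exp (μ * t) * νhat t)
      Filter.atTop (nhds 0) := by
  set m := ν.measure with hm
  set I : ℝ := ∫ t in Set.Ici (0:ℝ), Real.exp (-ρ * t) ∂m with hI
  set g : ℝ → ℝ := fun t => Real.exp (-ρ * t) * Real.exp (μ * t) * νhat t with hg
  have hI0 : 0 ≤ I := setIntegral_nonneg measurableSet_Ici fun s _ => (Real.exp_pos _).le
  -- integrability of exp(-μ s) on compact intervals
  have hexp_int : ∀ t : ℝ, IntegrableOn (fun s => Real.exp (-μ * s)) (Set.Icc 0 t) m :=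
    fun t => (Real.continuous_exp.comp (continuous_const.mul continuous_id)).integrableOn_Icc
  have hexp_int' : ∀ t : ℝ, IntegrableOn (fun s => Real.exp (-ρ * s)) (Set.Icc 0 t) m :=
    fun t => (Real.continuous_exp.comp (continuous_const.mul continuous_id)).integrableOn_Icc
  -- νhat is monotone, nonnegative, measurable
  have hmono : Monotone νhat := by
    intro a b hab
    rw [hνhat, hνhat]
    exact setIntegral_mono_set (hexp_int b)
      (Filter.Eventually.of_forall fun s => (Real.exp_pos _).le)
      (HasSubset.Subset.eventuallyLE (Set.Icc_subset_Icc le_rfl hab))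
  have hnn : ∀ t, 0 ≤ νhat t := by
    intro t
    rw [hνhat]
    exact setIntegral_nonneg measurableSet_Icc fun s _ => (Real.exp_pos _).le
  have hgnn : ∀ t, 0 ≤ g t := fun t =>
    mul_nonneg (mul_nonneg (Real.exp_pos _).le (Real.exp_pos _).le) (hnn t)
  have hgmeas : Measurable g := by
    apply Measurable.mul _ hmono.measurable
    exact ((Real.measurable_exp.comp (measurable_const.mul measurable_id)).mul
      (Real.measurable_exp.comp (measurable_const.mul measurable_id)))
  -- the product kernel
  set F : ℝ → ℝ → ENNReal := fun t s =>
    if 0 < t ∧ s ∈ Set.Icc 0 t then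
      ENNReal.ofReal (Real.exp ((μ - ρ) * t) * Real.exp (-μ * s)) else 0 with hF
  have hFmeas : Measurable (Function.uncurry F) := by
    apply Measurable.ite
    · have : {p : ℝ × ℝ | 0 < p.1 ∧ p.2 ∈ Set.Icc 0 p.1} =
        {p : ℝ × ℝ | 0 < p.1} ∩ ({p : ℝ × ℝ | 0 ≤ p.2} ∩ {p : ℝ × ℝ | p.2 ≤ p.1}) := by
        ext p; simp [Set.mem_Icc, and_assoc]
      rw [show MeasurableSet {p : ℝ × ℝ | 0 < p.1 ∧ p.2 ∈ Set.Icc 0 p.1} ↔ True from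
        iff_of_eq (eq_true ?_)]
      · trivial
      rw [this]
      exact (measurableSet_lt measurable_const measurable_fst).inter
        ((measurableSet_le measurable_const measurable_snd).inter
          (measurableSet_le measurable_snd measurable_fst))
    · exact ((Real.measurable_exp.comp (measurable_const.mul measurable_fst)).mul
        (Real.measurable_exp.comp (measurable_const.mul measurable_snd))).ennreal_ofReal
    · exact measurable_const
  -- Step A: the LHS lintegral equals iterated lintegral of F
  have stepA : ∫⁻ t in Set.Ioi (0:ℝ), ENNReal.ofReal (g t) =
      ∫⁻ t, ∫⁻ s, F t s ∂m := by
    rw [← lintegral_indicator measurableSet_Ioi]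
    apply lintegral_congr
    intro t
    by_cases ht : 0 < t
    · have hFt : (fun s => F t s) = (Set.Icc 0 t).indicator
          (fun s => ENNReal.ofReal (Real.exp ((μ - ρ) * t) * Real.exp (-μ * s))) := by
        funext s
        by_cases hs : s ∈ Set.Icc 0 t
        · rw [hF]; simp only
          rw [if_pos ⟨ht, hs⟩, Set.indicator_of_mem hs]
        · rw [hF]; simp only
          rw [if_neg (by rintro ⟨-, h⟩; exact hs h), Set.indicator_of_notMem hs]
      rw [hFt, lintegral_indicator measurableSet_Icc,
        ← ofReal_integral_eq_lintegral_ofReal ((hexp_int t).const_mul _)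
          (Filter.Eventually.of_forall fun s =>
            mul_nonneg (Real.exp_pos _).le (Real.exp_pos _).le),
        Set.indicator_of_mem (Set.mem_Ioi.mpr ht), integral_const_mul, ← hνhat t]
      congr 1
      rw [hg]
      simp only [← Real.exp_add]
      ring_nf
    · have : ∀ s, F t s = 0 := fun s => by simp [hF, ht]
      simp only [this, lintegral_zero]
      rw [Set.indicator_of_notMem (by simpa using ht)]
  -- Step B: swap
  have stepB : ∫⁻ t, ∫⁻ s, F t s ∂m = ∫⁻ s, ∫⁻ t, F t s ∂(volume : Measure ℝ) ∂m :=
    lintegral_lintegral_swap hFmeas.aemeasurable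
  -- value of the tail exponential integral
  have hexp_Ioi : ∀ s : ℝ, ∫ t in Set.Ioi s, Real.exp (-ρ * t) = Real.exp (-ρ * s) / ρ := by
    intro s
    have hderiv : ∀ x ∈ Set.Ioi s, HasDerivAt (fun t => -Real.exp (-ρ * t) / ρ)
        (Real.exp (-ρ * x)) x := by
      intro x _
      have h1 : HasDerivAt (fun t : ℝ => -ρ * t) (-ρ) x := by
        simpa using (hasDerivAt_id x).const_mul (-ρ)
      have h2 := (h1.exp.neg.div_const ρ)
      have he : Real.exp (-ρ * x) = -(Real.exp (-ρ * x) * -ρ) / ρ := by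
        field_simp
      rw [he]; exact h2
    have hcont : ContinuousWithinAt (fun t => -Real.exp (-ρ * t) / ρ) (Set.Ici s) s :=
      (((Real.continuous_exp.comp (continuous_const.mul continuous_id)).neg.div_const
        ρ).continuousWithinAt)
    have htend : Tendsto (fun t => -Real.exp (-ρ * t) / ρ) atTop (nhds 0) := by
      have : Tendsto (fun t : ℝ => Real.exp (-ρ * t)) atTop (nhds 0) := by
        have hlin : Tendsto (fun x : ℝ => ρ * x) atTop atTop :=
          Tendsto.const_mul_atTop hρ tendsto_id
        have h := Real.tendsto_exp_neg_atTop_nhds_zero.comp hlin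
        simpa [Function.comp_def, neg_mul] using h
      simpa using (this.neg.div_const ρ)
    have := integral_Ioi_of_hasDerivAt_of_tendsto hcont hderiv
      (exp_neg_integrableOn_Ioi s hρ) htend
    rw [this]; ring
  -- Step C: inner bound
  have stepC : ∀ s : ℝ, ∫⁻ t, F t s ∂(volume : Measure ℝ) ≤
      (Set.Ici (0:ℝ)).indicator (fun s => ENNReal.ofReal (ρ⁻¹ * Real.exp (-ρ * s))) s := by
    intro s
    by_cases hs : 0 ≤ s
    · rw [Set.indicator_of_mem (Set.mem_Ici.mpr hs)]
      have hbound : ∀ t, F t s ≤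
          (Set.Ici s).indicator (fun t => ENNReal.ofReal (Real.exp (-ρ * t))) t := by
        intro t
        by_cases htmem : 0 < t ∧ s ∈ Set.Icc 0 t
        · rw [hF]
          simp only
          rw [if_pos htmem, Set.indicator_of_mem (Set.mem_Ici.mpr htmem.2.2)]
          apply ENNReal.ofReal_le_ofReal
          rw [← Real.exp_add]
          apply Real.exp_le_exp.2
          have h1 : μ * (t - s) ≤ 0 :=
            mul_nonpos_of_nonpos_of_nonneg hμ (sub_nonneg.2 htmem.2.2)
          nlinarith [h1]
        · rw [hF]; simp only; rw [if_neg htmem]; exact zero_le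
      calc ∫⁻ t, F t s ∂(volume : Measure ℝ)
          ≤ ∫⁻ t, (Set.Ici s).indicator (fun t => ENNReal.ofReal (Real.exp (-ρ * t))) t :=
            lintegral_mono hbound
        _ = ∫⁻ t in Set.Ici s, ENNReal.ofReal (Real.exp (-ρ * t)) :=
            lintegral_indicator measurableSet_Ici _
        _ = ∫⁻ t in Set.Ioi s, ENNReal.ofReal (Real.exp (-ρ * t)) := by
            rw [← Measure.restrict_congr_set Ioi_ae_eq_Ici]
        _ = ENNReal.ofReal (∫ t in Set.Ioi s, Real.exp (-ρ * t)) :=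
            (ofReal_integral_eq_lintegral_ofReal (exp_neg_integrableOn_Ioi s hρ)
              (Filter.Eventually.of_forall fun t => (Real.exp_pos _).le)).symm
        _ = ENNReal.ofReal (ρ⁻¹ * Real.exp (-ρ * s)) := by
            rw [hexp_Ioi s, inv_mul_eq_div]
    · have : ∀ t, F t s = 0 := by
        intro t
        have hns : ¬ (0 < t ∧ s ∈ Set.Icc 0 t) := by
          rintro ⟨-, h0, -⟩; exact hs h0
        rw [hF]; simp only; rw [if_neg hns]
      simp [this, Set.indicator_of_notMem (fun h => hs (Set.mem_Ici.mp h))]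
  -- the key bound
  have hkey : ∫⁻ t in Set.Ioi (0:ℝ), ENNReal.ofReal (g t) ≤ ENNReal.ofReal (ρ⁻¹ * I) := by
    rw [stepA, stepB]
    calc ∫⁻ s, ∫⁻ t, F t s ∂(volume : Measure ℝ) ∂m
        ≤ ∫⁻ s, (Set.Ici (0:ℝ)).indicator
            (fun s => ENNReal.ofReal (ρ⁻¹ * Real.exp (-ρ * s))) s ∂m :=
          lintegral_mono stepC
      _ = ∫⁻ s in Set.Ici (0:ℝ), ENNReal.ofReal (ρ⁻¹ * Real.exp (-ρ * s)) ∂m :=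
          lintegral_indicator measurableSet_Ici _
      _ = ENNReal.ofReal (∫ s in Set.Ici (0:ℝ), ρ⁻¹ * Real.exp (-ρ * s) ∂m) :=
          (ofReal_integral_eq_lintegral_ofReal (hint.const_mul _)
            (Filter.Eventually.of_forall fun s =>
              mul_nonneg (inv_nonneg.2 hρ.le) (Real.exp_pos _).le)).symm
      _ = ENNReal.ofReal (ρ⁻¹ * I) := by rw [integral_const_mul]
  -- integrability
  have hginteg : IntegrableOn g (Set.Ioi 0) (volume : Measure ℝ) := by
    refine ⟨hgmeas.aestronglyMeasurable, ?_⟩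
    rw [hasFiniteIntegral_iff_ofReal (Filter.Eventually.of_forall hgnn)]
    exact lt_of_le_of_lt hkey ENNReal.ofReal_lt_top
  refine ⟨hginteg, ?_, ?_⟩
  · -- the integral bound
    have heq : ∫ t in Set.Ioi (0:ℝ), g t =
        (∫⁻ t in Set.Ioi (0:ℝ), ENNReal.ofReal (g t)).toReal :=
      integral_eq_lintegral_of_nonneg_ae (Filter.Eventually.of_forall hgnn)
        hgmeas.aestronglyMeasurable
    have h2 : (∫⁻ t in Set.Ioi (0:ℝ), ENNReal.ofReal (g t)).toReal ≤ ρ⁻¹ * I := by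
      have := ENNReal.toReal_mono ENNReal.ofReal_ne_top hkey
      rwa [ENNReal.toReal_ofReal (mul_nonneg (inv_nonneg.2 hρ.le) hI0)] at this
    calc ∫ t in Set.Ioi (0:ℝ), g t ≤ ρ⁻¹ * I := heq ▸ h2
      _ ≤ ρ⁻¹ * ν 0 + ρ⁻¹ * I :=
        le_add_of_nonneg_left (mul_nonneg (inv_nonneg.2 hρ.le) hν0)
  · -- the limit
    -- tail function
    set B : ℝ → ℝ := fun r => ∫ s in Set.Ioi r, Real.exp (-ρ * s) ∂m with hB
    have hBint : ∀ r : ℝ, 0 ≤ r → IntegrableOn (fun s => Real.exp (-ρ * s)) (Set.Ioi r) m :=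
      fun r hr => hint.mono_set fun x hx => le_trans hr (le_of_lt hx)
    have hBnat : Tendsto (fun n : ℕ => B (n : ℝ)) atTop (nhds 0) := by
      have hunion : (⋃ n : ℕ, Set.Icc (0:ℝ) n) = Set.Ici 0 := by
        ext x
        simp only [Set.mem_iUnion, Set.mem_Icc, Set.mem_Ici]
        constructor
        · rintro ⟨n, h, -⟩; exact h
        · intro hx; obtain ⟨n, hn⟩ := exists_nat_ge x; exact ⟨n, hx, hn⟩
      have hmonoset : Monotone fun n : ℕ => Set.Icc (0:ℝ) n := fun a b hab =>
        Set.Icc_subset_Icc le_rfl (by exact_mod_cast hab)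
      have htendI : Tendsto (fun n : ℕ => ∫ s in Set.Icc (0:ℝ) n, Real.exp (-ρ * s) ∂m)
          atTop (nhds I) := by
        have := tendsto_setIntegral_of_monotone (f := fun s => Real.exp (-ρ * s)) (μ := m)
          (fun n : ℕ => measurableSet_Icc) hmonoset (by rw [hunion]; exact hint)
        rwa [hunion] at this
      have hsplit : ∀ n : ℕ, B (n : ℝ) = I - ∫ s in Set.Icc (0:ℝ) n, Real.exp (-ρ * s) ∂m := by
        intro n
        have hdisj : Disjoint (Set.Icc (0:ℝ) n) (Set.Ioi (n:ℝ)) :=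
          (Set.Iic_disjoint_Ioi le_rfl).mono_left Set.Icc_subset_Iic_self
        have hun : Set.Icc (0:ℝ) n ∪ Set.Ioi (n:ℝ) = Set.Ici 0 :=
          Set.Icc_union_Ioi_eq_Ici (Nat.cast_nonneg n)
        have := setIntegral_union hdisj measurableSet_Ioi (hexp_int' (n:ℝ))
          (hBint n (Nat.cast_nonneg n)) (f := fun s => Real.exp (-ρ * s)) (μ := m)
        rw [hun] at this
        rw [hB]
        simp only
        rw [← hI] at this
        linarith [this]
      have : Tendsto (fun n : ℕ => I - ∫ s in Set.Icc (0:ℝ) n, Real.exp (-ρ * s) ∂m)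
          atTop (nhds (I - I)) := tendsto_const_nhds.sub htendI
      rw [sub_self] at this
      exact this.congr fun n => (hsplit n).symm
    -- bound: for t ≥ 0, g t ≤ exp(-(ρ/2) t) * I + B (⌊t/2⌋₊)
    have hbound : ∀ t : ℝ, 0 ≤ t →
        g t ≤ Real.exp (-(ρ/2) * t) * I + B (⌊t/2⌋₊ : ℕ) := by
      intro t ht
      have ht2 : (0:ℝ) ≤ t/2 := by linarith
      have ht2' : t/2 ≤ t := by linarith
      -- split νhat t
      have hsplit : νhat t = (∫ s in Set.Icc (0:ℝ) (t/2), Real.exp (-μ * s) ∂m) +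
          ∫ s in Set.Ioc (t/2) t, Real.exp (-μ * s) ∂m := by
        rw [hνhat]
        have hsub0 : Set.Ioc (t/2) t ⊆ Set.Icc 0 t :=
          fun x hx => ⟨le_trans ht2 hx.1.le, hx.2⟩
        rw [← setIntegral_union ((Set.Iic_disjoint_Ioi le_rfl).mono Set.Icc_subset_Iic_self
          Set.Ioc_subset_Ioi_self) measurableSet_Ioc
          (hexp_int (t/2)) ((hexp_int t).mono_set hsub0)]
        rw [Set.Icc_union_Ioc_eq_Icc ht2 ht2']
      have hgt : g t = Real.exp ((μ - ρ) * t) * νhat t := by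
        rw [hg]; simp only [← Real.exp_add]; ring_nf
      rw [hgt, hsplit, mul_add]
      have hterm1 : Real.exp ((μ - ρ) * t) * ∫ s in Set.Icc (0:ℝ) (t/2), Real.exp (-μ * s) ∂m ≤
          Real.exp (-(ρ/2) * t) * I := by
        have h1 : ∀ s ∈ Set.Icc (0:ℝ) (t/2),
            Real.exp ((μ - ρ) * t) * Real.exp (-μ * s) ≤
            Real.exp (-(ρ/2) * t) * Real.exp (-ρ * s) := by
          intro s hs
          rw [← Real.exp_add, ← Real.exp_add]
          apply Real.exp_le_exp.2
          rcases hs with ⟨hs0, hst⟩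
          nlinarith
        calc Real.exp ((μ - ρ) * t) * ∫ s in Set.Icc (0:ℝ) (t/2), Real.exp (-μ * s) ∂m
            = ∫ s in Set.Icc (0:ℝ) (t/2), Real.exp ((μ - ρ) * t) * Real.exp (-μ * s) ∂m :=
              (integral_const_mul _ _).symm
          _ ≤ ∫ s in Set.Icc (0:ℝ) (t/2), Real.exp (-(ρ/2) * t) * Real.exp (-ρ * s) ∂m := by
              apply setIntegral_mono_on ((hexp_int (t/2)).const_mul _)
                ((hexp_int' (t/2)).const_mul _) measurableSet_Icc h1
          _ ≤ ∫ s in Set.Ici (0:ℝ), Real.exp (-(ρ/2) * t) * Real.exp (-ρ * s) ∂m := by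
              apply setIntegral_mono_set (hint.const_mul _)
                (Filter.Eventually.of_forall fun s =>
                  mul_nonneg (Real.exp_pos _).le (Real.exp_pos _).le)
                (HasSubset.Subset.eventuallyLE fun x hx => hx.1)
          _ = Real.exp (-(ρ/2) * t) * I := integral_const_mul _ _
      have hterm2 : Real.exp ((μ - ρ) * t) * ∫ s in Set.Ioc (t/2) t, Real.exp (-μ * s) ∂m ≤
          B (⌊t/2⌋₊ : ℕ) := by
        have hfloor : (⌊t/2⌋₊ : ℝ) ≤ t/2 := Nat.floor_le ht2
        have h1 : ∀ s ∈ Set.Ioc (t/2) t,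
            Real.exp ((μ - ρ) * t) * Real.exp (-μ * s) ≤ Real.exp (-ρ * s) := by
          intro s hs
          rw [← Real.exp_add]
          apply Real.exp_le_exp.2
          rcases hs with ⟨hs1, hs2⟩
          nlinarith
        calc Real.exp ((μ - ρ) * t) * ∫ s in Set.Ioc (t/2) t, Real.exp (-μ * s) ∂m
            = ∫ s in Set.Ioc (t/2) t, Real.exp ((μ - ρ) * t) * Real.exp (-μ * s) ∂m :=
              (integral_const_mul _ _).symm
          _ ≤ ∫ s in Set.Ioc (t/2) t, Real.exp (-ρ * s) ∂m := by
              have hsub : Set.Ioc (t/2) t ⊆ Set.Icc 0 t :=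
                fun x hx => ⟨le_trans ht2 hx.1.le, hx.2⟩
              apply setIntegral_mono_on (((hexp_int t).mono_set hsub).const_mul _)
                ((hexp_int' t).mono_set hsub) measurableSet_Ioc h1
          _ ≤ ∫ s in Set.Ioi (⌊t/2⌋₊ : ℝ), Real.exp (-ρ * s) ∂m := by
              apply setIntegral_mono_set (hBint _ (Nat.cast_nonneg _))
                (Filter.Eventually.of_forall fun s => (Real.exp_pos _).le)
                (HasSubset.Subset.eventuallyLE fun x hx => lt_of_le_of_lt hfloor hx.1)
          _ = B (⌊t/2⌋₊ : ℕ) := rfl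
      linarith
    -- upper bound tends to 0
    have htop : Tendsto (fun t : ℝ => Real.exp (-(ρ/2) * t) * I + B (⌊t/2⌋₊ : ℕ))
        atTop (nhds 0) := by
      have h1 : Tendsto (fun t : ℝ => Real.exp (-(ρ/2) * t) * I) atTop (nhds 0) := by
        have hlin : Tendsto (fun x : ℝ => ρ/2 * x) atTop atTop :=
          Tendsto.const_mul_atTop (half_pos hρ) tendsto_id
        have h := Real.tendsto_exp_neg_atTop_nhds_zero.comp hlin
        have h' : Tendsto (fun t : ℝ => Real.exp (-(ρ/2) * t)) atTop (nhds 0) := by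
          simpa [Function.comp_def, neg_mul] using h
        simpa using h'.mul_const I
      have h2 : Tendsto (fun t : ℝ => B (⌊t/2⌋₊ : ℕ)) atTop (nhds 0) := by
        apply hBnat.comp
        exact tendsto_nat_floor_atTop.comp (tendsto_id.atTop_div_const two_pos)
      simpa using h1.add h2
    apply squeeze_zero' (Filter.Eventually.of_forall hgnn)
      _ htop
    filter_upwards [Filter.eventually_ge_atTop (0:ℝ)] with t ht
    exact hbound t ht
end

section
/- Let μ < 0, η_max > 0, and let a : [0,∞) → (0,∞) be continuously differentiable with ȧ > 0. If τ_M(r,x) is defined implicitly by x − f_M(τ_M) = e^(|μ|τ_M) a(r + η_max τ_M) for x > a(r), then τ_M is continuously differentiable with ∂τ_M/∂x = 1 / (|μ|x + η_max + η_max e^(|μ|τ_M) ȧ(r + η_max τ_M)) > 0. -/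
open Real Set

/-- Implicit differentiation of τ_M: if x − f_M(τ_M(r,x)) = e^(|μ|τ_M) a(r + η_max τ_M)
for x > a(r), then ∂τ_M/∂x = 1/(|μ|x + η_max + η_max e^(|μ|τ_M) ȧ(r + η_max τ_M)) > 0. -/
theorem stmt7 (μ ηmax : ℝ) (hμ : μ < 0) (hη : 0 < ηmax)
    (a : ℝ → ℝ) (ha : ContDiff ℝ 1 a)
    (ha_pos : ∀ s > (0:ℝ), 0 < a s) (ha' : ∀ s > (0:ℝ), 0 < deriv a s)
    (fM : ℝ → ℝ)
    (hf : ∀ t : ℝ, fM t = (ηmax / |μ|) * (Real.exp (|μ| * t) - 1))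
    (τM : ℝ → ℝ → ℝ)
    (hτ_pos : ∀ r > (0:ℝ), ∀ x, a r < x → 0 < τM r x)
    (hτ : ∀ r > (0:ℝ), ∀ x, a r < x →
      x - fM (τM r x) = Real.exp (|μ| * τM r x) * a (r + ηmax * τM r x)) :
    ∀ r > (0:ℝ), ∀ x, a r < x →
      HasDerivAt (fun y => τM r y)
        (1 / (|μ| * x + ηmax +
          ηmax * Real.exp (|μ| * τM r x) * deriv a (r + ηmax * τM r x))) x ∧
      0 < 1 / (|μ| * x + ηmax +
          ηmax * Real.exp (|μ| * τM r x) * deriv a (r + ηmax * τM r x)) := by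
  intro r hr x hx
  have hμ0 : (0:ℝ) < |μ| := abs_pos.mpr hμ.ne
  set g : ℝ → ℝ := fun t => ηmax / |μ| * (Real.exp (|μ| * t) - 1) +
      Real.exp (|μ| * t) * a (r + ηmax * t) with hg_def
  -- derivative of g
  have hgd : ∀ t : ℝ, HasDerivAt g
      (ηmax * Real.exp (|μ| * t) + (|μ| * Real.exp (|μ| * t) * a (r + ηmax * t) +
        ηmax * Real.exp (|μ| * t) * deriv a (r + ηmax * t))) t := by
    intro t
    have he : HasDerivAt (fun t : ℝ => Real.exp (|μ| * t)) (Real.exp (|μ| * t) * (|μ| * 1)) t :=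
      ((hasDerivAt_id t).const_mul |μ|).exp
    have hinner : HasDerivAt (fun t : ℝ => r + ηmax * t) (ηmax * 1) t :=
      ((hasDerivAt_id t).const_mul ηmax).const_add r
    have had : HasDerivAt a (deriv a (r + ηmax * t)) (r + ηmax * t) :=
      ((ha.differentiable one_ne_zero) (r + ηmax * t)).hasDerivAt
    have hcomp : HasDerivAt (fun t : ℝ => a (r + ηmax * t))
        (deriv a (r + ηmax * t) * (ηmax * 1)) t := had.comp t hinner
    have := ((he.sub_const 1).const_mul (ηmax / |μ|)).add (he.mul hcomp)
    refine this.congr_deriv ?_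
    field_simp
  -- g is the inverse relation
  have hgy : ∀ y, a r < y → g (τM r y) = y := by
    intro y hy
    have h := hτ r hr y hy
    rw [hf] at h
    simp only [hg_def]
    linarith
  have hg0 : g 0 = a r := by simp [hg_def]
  -- strict monotone on Ici 0
  have hmono : StrictMonoOn g (Ici 0) := by
    apply strictMonoOn_of_deriv_pos (convex_Ici 0)
    · exact fun t _ => (hgd t).differentiableAt.continuousAt.continuousWithinAt
    · intro t ht
      rw [interior_Ici] at ht
      rw [(hgd t).deriv]
      have ht' : (0:ℝ) < t := ht
      have h1 : 0 < r + ηmax * t := by positivity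
      have h2 := ha_pos _ h1
      have h3 := ha' _ h1
      positivity
  set t0 := τM r x with ht0_def
  have ht0 : 0 < t0 := hτ_pos r hr x hx
  have hgx : g t0 = x := hgy x hx
  set D : ℝ := |μ| * x + ηmax + ηmax * Real.exp (|μ| * t0) * deriv a (r + ηmax * t0) with hD_def
  -- D positive
  have har : 0 < a r := ha_pos r hr
  have hxpos : 0 < x := har.trans hx
  have hs0 : 0 < r + ηmax * t0 := by positivity
  have hD : 0 < D := by
    have h3 := ha' _ hs0
    rw [hD_def]
    positivity
  -- derivative of g at t0 equals D
  have hgdD : HasDerivAt g D t0 := by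
    have h := hτ r hr x hx
    rw [hf] at h
    have hkey : |μ| * Real.exp (|μ| * t0) * a (r + ηmax * t0)
        = |μ| * x - ηmax * (Real.exp (|μ| * t0) - 1) := by
      have := congrArg (fun z => |μ| * z) h
      field_simp at this
      linarith
    have := hgd t0
    rw [hkey] at this
    convert this using 1
    rw [hD_def]; ring
  -- continuity of τM r at x
  have hcont : ContinuousAt (τM r) x := by
    rw [Metric.continuousAt_iff]
    intro ε hε
    set ε' : ℝ := min (ε / 2) (t0 / 2) with hε'_def
    have hε'0 : 0 < ε' := lt_min (by linarith) (by linarith)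
    have hε'le : ε' ≤ t0 / 2 := min_le_right _ _
    have hε'le2 : ε' ≤ ε / 2 := min_le_left _ _
    have hm1 : (0:ℝ) < t0 - ε' := by linarith
    have hmem1 : t0 - ε' ∈ Ici (0:ℝ) := le_of_lt hm1
    have hmem0 : t0 ∈ Ici (0:ℝ) := le_of_lt ht0
    have hmem2 : t0 + ε' ∈ Ici (0:ℝ) := mem_Ici.mpr (by linarith)
    have hlt1 : g (t0 - ε') < x := by
      have := hmono hmem1 hmem0 (by linarith)
      rwa [hgx] at this
    have hlt2 : x < g (t0 + ε') := by
      have := hmono hmem0 hmem2 (by linarith)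
      rwa [hgx] at this
    have hlt0 : a r < g (t0 - ε') := by
      have := hmono (self_mem_Ici) hmem1 hm1
      rwa [hg0] at this
    refine ⟨min (x - g (t0 - ε')) (g (t0 + ε') - x),
      lt_min (by linarith) (by linarith), ?_⟩
    intro y hy
    rw [Real.dist_eq, abs_lt] at hy
    have hy1 : g (t0 - ε') < y := by
      have := hy.1
      have h2 : min (x - g (t0 - ε')) (g (t0 + ε') - x) ≤ x - g (t0 - ε') := min_le_left _ _
      linarith
    have hy2 : y < g (t0 + ε') := by
      have := hy.2
      have h2 : min (x - g (t0 - ε')) (g (t0 + ε') - x) ≤ g (t0 + ε') - x := min_le_right _ _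
      linarith
    have hay : a r < y := hlt0.trans hy1
    have hgyy : g (τM r y) = y := hgy y hay
    have hty : τM r y ∈ Ici (0:ℝ) := le_of_lt (hτ_pos r hr y hay)
    have hb1 : t0 - ε' < τM r y := by
      apply (hmono.lt_iff_lt hmem1 hty).mp
      rw [hgyy]; exact hy1
    have hb2 : τM r y < t0 + ε' := by
      apply (hmono.lt_iff_lt hty hmem2).mp
      rw [hgyy]; exact hy2
    rw [Real.dist_eq, abs_lt]
    constructor <;> [linarith; linarith]
  have hev : ∀ᶠ y in nhds x, g (τM r y) = y :=
    Filter.eventually_of_mem (Ioi_mem_nhds hx) (fun y hy => hgy y hy)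
  have hinv : HasDerivAt (τM r) D⁻¹ x :=
    HasDerivAt.of_local_left_inverse hcont hgdD hD.ne' hev
  rw [← one_div] at hinv
  exact ⟨hinv, by positivity⟩
end

section
/- In the μ = 0 deterministic setting, the function w₁ satisfies the first-order PDE η_max(∂_r w₁(r,x) − ∂_x w₁(r,x)) = ρ̄ w₁(r,x) − π(x) for all (r,x) with a(r) < x. -/
open Real Set MeasureTheory Filter Topology

/-- μ = 0 case: w₁ satisfies η_max(∂_r w₁ − ∂_x w₁) = ρ̄ w₁ − π(x) for x > a(r),
where the partial derivatives are given by their known integral formulas. -/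
theorem stmt11 (ρb ηmax : ℝ) (hρ : 0 < ρb) (hη : 0 < ηmax)
    (pf a : ℝ → ℝ)
    (hpf : ContDiff ℝ 1 pf) (hpf_mono : StrictMonoOn pf (Set.Ici 0))
    (hpf'_mono : MonotoneOn (deriv pf) (Set.Ici 0))
    (ha : ContDiff ℝ 1 a) (ha_mono : StrictMono a) (ha_pos : ∀ s, 0 < a s)
    (hint : MeasureTheory.IntegrableOn
      (fun t : ℝ => Real.exp (-ρb * t) * pf (a (ηmax * t))) (Set.Ioi 0))
    (τM : ℝ → ℝ → ℝ)
    (hτ : ∀ r ≥ (0:ℝ), ∀ x, a r < x →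
      x - ηmax * τM r x = a (r + ηmax * τM r x) ∧ 0 < τM r x)
    (w1 : ℝ → ℝ → ℝ)
    (hw1 : ∀ r x : ℝ, w1 r x =
      (∫ t in Set.Ioc (0:ℝ) (τM r x), Real.exp (-ρb * t) * pf (x - ηmax * t)) +
      ∫ t in Set.Ioi (τM r x), Real.exp (-ρb * t) * pf (a (r + ηmax * t))) :
    ∀ r ≥ (0:ℝ), ∀ x, a r < x →
      ηmax * ((∫ t in Set.Ioi (τM r x),
          Real.exp (-ρb * t) * deriv pf (a (r + ηmax * t)) * deriv a (r + ηmax * t)) -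
        ∫ t in Set.Ioc (0:ℝ) (τM r x), Real.exp (-ρb * t) * deriv pf (x - ηmax * t)) =
      ρb * w1 r x - pf x := by
  have hpfd : Differentiable ℝ pf := hpf.differentiable one_ne_zero
  have had : Differentiable ℝ a := ha.differentiable one_ne_zero
  have hpf'c : Continuous (deriv pf) := hpf.continuous_deriv le_rfl
  have ha'c : Continuous (deriv a) := ha.continuous_deriv le_rfl
  -- derivative of pf is nonneg on positive reals
  have hpf'nn : ∀ z : ℝ, 0 < z → 0 ≤ deriv pf z := by
    intro z hz
    have hd : HasDerivWithinAt pf (deriv pf z) (Ioi z) z :=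
      ((hpfd z).hasDerivAt).hasDerivWithinAt
    have hT := (hasDerivWithinAt_iff_tendsto_slope' (notMem_Ioi_self)).mp hd
    refine ge_of_tendsto hT ?_
    filter_upwards [self_mem_nhdsWithin] with y hy
    rw [slope_def_field]
    have hzy : z < y := hy
    have h1 : pf z ≤ pf y := (hpf_mono.monotoneOn) hz.le (hz.trans hzy).le hzy.le
    have h2 : (0:ℝ) < y - z := by linarith
    have h3 : (0:ℝ) ≤ pf y - pf z := by linarith
    exact div_nonneg h3 h2.le
  -- derivative of a is nonneg
  have ha'nn : ∀ z : ℝ, 0 ≤ deriv a z := by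
    intro z
    have hd : HasDerivWithinAt a (deriv a z) (Ioi z) z :=
      ((had z).hasDerivAt).hasDerivWithinAt
    have hT := (hasDerivWithinAt_iff_tendsto_slope' (notMem_Ioi_self)).mp hd
    refine ge_of_tendsto hT ?_
    filter_upwards [self_mem_nhdsWithin] with y hy
    rw [slope_def_field]
    have hzy : z < y := hy
    have h1 : a z ≤ a y := (ha_mono.monotone) hzy.le
    have h2 : (0:ℝ) < y - z := by linarith
    have h3 : (0:ℝ) ≤ a y - a z := by linarith
    exact div_nonneg h3 h2.le
  intro r hr x hx
  obtain ⟨hB, hτ0⟩ := hτ r hr x hx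
  set τ : ℝ := τM r x with hτdef
  have hτle : (0:ℝ) ≤ τ := hτ0.le
  set φ : ℝ → ℝ := fun t => pf (a (r + ηmax * t)) with hφdef
  set g : ℝ → ℝ := fun t => Real.exp (-ρb * t) * φ t with hgdef
  have hφc : Continuous φ :=
    hpfd.continuous.comp (had.continuous.comp (continuous_const.add
      (continuous_const.mul continuous_id)))
  have hgc : Continuous g := by
    apply Continuous.mul ?_ hφc
    exact Real.continuous_exp.comp (continuous_const.mul continuous_id)
  have hφmono : Monotone φ := by
    intro t₁ t₂ h
    have harg : r + ηmax * t₁ ≤ r + ηmax * t₂ := by nlinarith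
    have hmono : a (r + ηmax * t₁) ≤ a (r + ηmax * t₂) := ha_mono.monotone harg
    exact (hpf_mono.monotoneOn) (ha_pos _).le (ha_pos _).le hmono
  -- Step 1 : integrability of g on (τ, ∞)
  have hgint : IntegrableOn g (Ioi τ) := by
    set c : ℝ := r / ηmax with hcdef
    have hc : 0 ≤ c := div_nonneg hr hη.le
    have hηc : ηmax * c = r := by rw [hcdef]; field_simp
    have hsub : IntegrableOn (fun t : ℝ => Real.exp (-ρb * t) * pf (a (ηmax * t)))
        (Ioi (τ + c)) := hint.mono_set (Ioi_subset_Ioi (by positivity))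
    have A : MeasurableEmbedding fun x : ℝ => x + c :=
      (Homeomorph.addRight c).isClosedEmbedding.measurableEmbedding
    rw [← map_add_right_eq_self volume c] at hsub
    have h2 : IntegrableOn (fun t : ℝ => Real.exp (-ρb * (t + c)) * pf (a (ηmax * (t + c))))
        (Ioi τ) := by
      have := (A.integrableOn_map_iff).mp hsub
      simpa [Function.comp_def] using this
    have h3 : IntegrableOn
        (fun t : ℝ => Real.exp (ρb * c) * (Real.exp (-ρb * (t + c)) * pf (a (ηmax * (t + c)))))
        (Ioi τ) := h2.const_mul (Real.exp (ρb * c))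
    apply h3.congr_fun ?_ measurableSet_Ioi
    intro t _
    have e1 : ρb * c + -ρb * (t + c) = -ρb * t := by ring
    have e2 : ηmax * (t + c) = r + ηmax * t := by rw [mul_add, hηc]; ring
    calc Real.exp (ρb * c) * (Real.exp (-ρb * (t + c)) * pf (a (ηmax * (t + c))))
        = Real.exp (ρb * c + -ρb * (t + c)) * pf (a (ηmax * (t + c))) := by
          rw [Real.exp_add]; ring
      _ = Real.exp (-ρb * t) * pf (a (r + ηmax * t)) := by rw [e1, e2]
      _ = g t := rfl
  set L : ℝ := ∫ t in Ioi τ, g t with hLdef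
  have hL : Tendsto (fun T : ℝ => ∫ s in τ..T, g s) atTop (𝓝 L) :=
    intervalIntegral_tendsto_integral_Ioi τ hgint tendsto_id
  -- Step 2 : g tends to 0 at +∞
  have hg0 : Tendsto g atTop (𝓝 0) := by
    have hexp0 : Tendsto (fun t : ℝ => Real.exp (-ρb * t)) atTop (𝓝 0) := by
      have h1 : Tendsto (fun t : ℝ => ρb * t) atTop atTop :=
        Tendsto.const_mul_atTop hρ tendsto_id
      have h2 := Real.tendsto_exp_neg_atTop_nhds_zero.comp h1
      have h3 : (fun t : ℝ => Real.exp (-ρb * t))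
          = (fun x : ℝ => Real.exp (-x)) ∘ fun t : ℝ => ρb * t := by
        funext t
        simp [neg_mul]
      rw [h3]
      exact h2
    by_cases hbd : ∃ M, ∀ t, φ t ≤ M
    · obtain ⟨M, hM⟩ := hbd
      set K := max |φ 0| |M| with hKdef
      have hK : ∀ t : ℝ, 0 ≤ t → |φ t| ≤ K := by
        intro t ht
        rcases le_total 0 (φ t) with h | h
        · calc |φ t| = φ t := abs_of_nonneg h
            _ ≤ M := hM t
            _ ≤ |M| := le_abs_self M
            _ ≤ K := le_max_right _ _
        · have h0 : φ 0 ≤ φ t := hφmono ht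
          calc |φ t| = -φ t := abs_of_nonpos h
            _ ≤ -φ 0 := by linarith
            _ ≤ |φ 0| := neg_le_abs _
            _ ≤ K := le_max_left _ _
      apply squeeze_zero_norm' (a := fun t : ℝ => Real.exp (-ρb * t) * K)
      · filter_upwards [eventually_ge_atTop (0:ℝ)] with t ht
        have : ‖g t‖ = Real.exp (-ρb * t) * |φ t| := by
          rw [hgdef]
          simp [abs_mul, abs_of_pos (Real.exp_pos _)]
        rw [this]
        exact mul_le_mul_of_nonneg_left (hK t ht) (Real.exp_pos _).le
      · simpa using hexp0.mul_const K
    · push_neg at hbd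
      obtain ⟨t₀, ht₀⟩ := hbd 0
      have hφnn : ∀ T, t₀ ≤ T → 0 ≤ φ T := fun T hT => ht₀.le.trans (hφmono hT)
      have hL2 : Tendsto (fun T : ℝ => ∫ s in τ..(T+1), g s) atTop (𝓝 L) :=
        intervalIntegral_tendsto_integral_Ioi τ hgint
          (tendsto_atTop_add_const_right atTop 1 tendsto_id)
      have hdiff : Tendsto (fun T : ℝ => (∫ s in τ..(T+1), g s) - ∫ s in τ..T, g s)
          atTop (𝓝 0) := by simpa using hL2.sub hL
      have hsq : Tendsto (fun T : ℝ => Real.exp (-ρb * (T+1)) * φ T) atTop (𝓝 0) := by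
        apply tendsto_of_tendsto_of_tendsto_of_le_of_le' tendsto_const_nhds hdiff
        · filter_upwards [eventually_ge_atTop t₀] with T hT
          exact mul_nonneg (Real.exp_pos _).le (hφnn T hT)
        · filter_upwards [eventually_ge_atTop t₀] with T hT
          have h1 : (∫ s in τ..(T+1), g s) - ∫ s in τ..T, g s = ∫ s in T..(T+1), g s :=
            intervalIntegral.integral_interval_sub_left (hgc.intervalIntegrable _ _)
              (hgc.intervalIntegrable _ _)
          rw [h1]
          have hle : ∀ s ∈ Icc T (T+1), Real.exp (-ρb * (T+1)) * φ T ≤ g s := by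
            intro s hs
            have he : Real.exp (-ρb * (T+1)) ≤ Real.exp (-ρb * s) := by
              apply Real.exp_le_exp.mpr
              nlinarith [hs.2]
            exact mul_le_mul he (hφmono hs.1) (hφnn T hT) (Real.exp_pos _).le
          calc Real.exp (-ρb * (T+1)) * φ T
              = ∫ _ in T..(T+1), (Real.exp (-ρb * (T+1)) * φ T) := by simp
            _ ≤ ∫ s in T..(T+1), g s := by
                apply intervalIntegral.integral_mono_on (by linarith)
                  intervalIntegrable_const (hgc.intervalIntegrable _ _) hle
      have hgeq : g = fun T : ℝ => Real.exp ρb * (Real.exp (-ρb * (T+1)) * φ T) := by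
        funext T
        show Real.exp (-ρb * T) * φ T = _
        rw [← mul_assoc, ← Real.exp_add]
        congr 2
        ring
      rw [hgeq]
      simpa using hsq.const_mul (Real.exp ρb)
  -- Step 3 : derivative of g
  have hgderiv : ∀ t : ℝ, HasDerivAt g
      (-ρb * g t + Real.exp (-ρb * t) * deriv pf (a (r + ηmax * t))
        * deriv a (r + ηmax * t) * ηmax) t := by
    intro t
    have h1 : HasDerivAt (fun t : ℝ => -ρb * t) (-ρb) t := by
      simpa using (hasDerivAt_id t).const_mul (-ρb)
    have hexp : HasDerivAt (fun t : ℝ => Real.exp (-ρb * t)) (Real.exp (-ρb * t) * (-ρb)) t :=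
      (Real.hasDerivAt_exp (-ρb * t)).comp t h1
    have harg : HasDerivAt (fun t : ℝ => r + ηmax * t) ηmax t := by
      simpa using ((hasDerivAt_id t).const_mul ηmax).const_add r
    have ha2 : HasDerivAt (fun t : ℝ => a (r + ηmax * t)) (deriv a (r + ηmax * t) * ηmax) t :=
      ((had _).hasDerivAt).comp t harg
    have hφd : HasDerivAt φ (deriv pf (a (r + ηmax * t)) * (deriv a (r + ηmax * t) * ηmax)) t :=
      ((hpfd _).hasDerivAt).comp t ha2
    have := hexp.fun_mul hφd
    refine this.congr_deriv ?_
    show _ = -ρb * (Real.exp (-ρb * t) * φ t) + _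
    ring
  -- Step 4 : improper FTC for the infinite part
  set ψ : ℝ → ℝ := fun t => g t + ρb * ∫ s in τ..t, g s with hψdef
  have hψderiv : ∀ t : ℝ, HasDerivAt ψ
      (Real.exp (-ρb * t) * deriv pf (a (r + ηmax * t)) * deriv a (r + ηmax * t) * ηmax) t := by
    intro t
    have hFTC : HasDerivAt (fun u : ℝ => ∫ s in τ..u, g s) (g t) t :=
      (hgc.integral_hasStrictDerivAt τ t).hasDerivAt
    have := (hgderiv t).fun_add (hFTC.const_mul ρb)
    refine this.congr_deriv ?_
    ring
  have hψtend : Tendsto ψ atTop (𝓝 (0 + ρb * L)) := hg0.add (hL.const_mul ρb)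
  have key2 : (∫ t in Ioi τ,
      Real.exp (-ρb * t) * deriv pf (a (r + ηmax * t)) * deriv a (r + ηmax * t) * ηmax)
      = (0 + ρb * L) - ψ τ := by
    apply integral_Ioi_of_hasDerivAt_of_nonneg' (fun t _ => hψderiv t) ?_ hψtend
    intro t _
    have h1 : 0 ≤ deriv pf (a (r + ηmax * t)) := hpf'nn _ (ha_pos _)
    have h2 : 0 ≤ deriv a (r + ηmax * t) := ha'nn _
    have h3 : 0 < Real.exp (-ρb * t) := Real.exp_pos _
    positivity
  have hψτ : ψ τ = g τ := by
    rw [hψdef]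
    simp
  rw [integral_mul_const, hψτ] at key2
  -- Step 5 : FTC on the finite part
  set A : ℝ := ∫ t in (0:ℝ)..τ, Real.exp (-ρb * t) * pf (x - ηmax * t) with hAdef
  set I1 : ℝ := ∫ t in (0:ℝ)..τ, Real.exp (-ρb * t) * deriv pf (x - ηmax * t) with hI1def
  have hF1deriv : ∀ t : ℝ, HasDerivAt (fun t : ℝ => Real.exp (-ρb * t) * pf (x - ηmax * t))
      ((-ρb) * (Real.exp (-ρb * t) * pf (x - ηmax * t))
        + (-ηmax) * (Real.exp (-ρb * t) * deriv pf (x - ηmax * t))) t := by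
    intro t
    have h1 : HasDerivAt (fun t : ℝ => -ρb * t) (-ρb) t := by
      simpa using (hasDerivAt_id t).const_mul (-ρb)
    have hexp : HasDerivAt (fun t : ℝ => Real.exp (-ρb * t)) (Real.exp (-ρb * t) * (-ρb)) t :=
      (Real.hasDerivAt_exp (-ρb * t)).comp t h1
    have harg : HasDerivAt (fun t : ℝ => x - ηmax * t) (-ηmax) t := by
      simpa using ((hasDerivAt_id t).const_mul ηmax).const_sub x
    have hcomp : HasDerivAt (fun t : ℝ => pf (x - ηmax * t))
        (deriv pf (x - ηmax * t) * (-ηmax)) t := ((hpfd _).hasDerivAt).comp t harg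
    have := hexp.fun_mul hcomp
    refine this.congr_deriv ?_
    ring
  have hcontA : Continuous fun t : ℝ => Real.exp (-ρb * t) * pf (x - ηmax * t) := by
    apply Continuous.mul
    · exact Real.continuous_exp.comp (continuous_const.mul continuous_id)
    · exact hpfd.continuous.comp (continuous_const.sub (continuous_const.mul continuous_id))
  have hcontI1 : Continuous fun t : ℝ => Real.exp (-ρb * t) * deriv pf (x - ηmax * t) := by
    apply Continuous.mul
    · exact Real.continuous_exp.comp (continuous_const.mul continuous_id)
    · exact hpf'c.comp (continuous_const.sub (continuous_const.mul continuous_id))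
  have eq1 : (-ρb) * A + (-ηmax) * I1
      = Real.exp (-ρb * τ) * pf (x - ηmax * τ) - pf x := by
    have hsub := intervalIntegral.integral_eq_sub_of_hasDerivAt
      (f := fun t : ℝ => Real.exp (-ρb * t) * pf (x - ηmax * t))
      (f' := fun t : ℝ => (-ρb) * (Real.exp (-ρb * t) * pf (x - ηmax * t))
        + (-ηmax) * (Real.exp (-ρb * t) * deriv pf (x - ηmax * t)))
      (a := (0:ℝ)) (b := τ) (fun t _ => hF1deriv t)
      (((continuous_const.mul hcontA : Continuous fun t : ℝ => (-ρb) * (Real.exp (-ρb * t) * pf (x - ηmax * t))).add (continuous_const.mul hcontI1 : Continuous fun t : ℝ => (-ηmax) * (Real.exp (-ρb * t) * deriv pf (x - ηmax * t)))).intervalIntegrable _ _)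
    rw [intervalIntegral.integral_add ((show Continuous fun t : ℝ => (-ρb) * (Real.exp (-ρb * t) * pf (x - ηmax * t)) from continuous_const.mul hcontA).intervalIntegrable _ _)
      ((show Continuous fun t : ℝ => (-ηmax) * (Real.exp (-ρb * t) * deriv pf (x - ηmax * t)) from continuous_const.mul hcontI1).intervalIntegrable _ _),
      intervalIntegral.integral_const_mul, intervalIntegral.integral_const_mul] at hsub
    rw [hAdef, hI1def, hsub]
    norm_num
  -- assemble
  rw [hw1 r x]
  have e_ioc1 : (∫ t in Ioc (0:ℝ) τ, Real.exp (-ρb * t) * pf (x - ηmax * t)) = A :=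
    (intervalIntegral.integral_of_le hτle).symm
  have e_ioc2 : (∫ t in Ioc (0:ℝ) τ, Real.exp (-ρb * t) * deriv pf (x - ηmax * t)) = I1 :=
    (intervalIntegral.integral_of_le hτle).symm
  have eC : (∫ t in Ioi τ, Real.exp (-ρb * t) * pf (a (r + ηmax * t))) = L := rfl
  rw [e_ioc1, e_ioc2, eC]
  have hgτ : g τ = Real.exp (-ρb * τ) * pf (x - ηmax * τ) := by
    show Real.exp (-ρb * τ) * pf (a (r + ηmax * τ)) = _
    rw [← hB]
  rw [hgτ] at key2
  linear_combination key2 + eq1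
end

section
/- In the μ = 0 deterministic setting, suppose b(r₀) = a(r₀) for some r₀ ≥ 0, where b is the free boundary defined by w₀(r, b(r)) = w₁(r, b(r)). Then τ_M(r₀, b(r₀)) = 0, hence w₁(r₀, a(r₀)) = ∫₀^∞ e^(-ρ̄t) π(a(r₀ + η_max t)) dt > π(a(r₀))/ρ̄ = w₀(r₀, a(r₀)), contradicting the boundary equality. Therefore b(r) > a(r) for all r ≥ 0. -/
open Real Set MeasureTheory

/-- μ = 0 case: the free boundary b (where w₀ = w₁) lies strictly above a:
if b(r₀) = a(r₀) then τ_M = 0 and w₁(r₀,a(r₀)) > w₀(r₀,a(r₀)), a contradiction;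
hence b(r) > a(r) for all r ≥ 0. -/
theorem stmt12 (ρb ηmax : ℝ) (hρ : 0 < ρb) (hη : 0 < ηmax)
    (pf a : ℝ → ℝ)
    (hpf : ContDiff ℝ 1 pf) (hpf_mono : StrictMonoOn pf (Set.Ici 0))
    (ha : ContDiff ℝ 1 a) (ha_mono : StrictMono a) (ha_pos : ∀ s, 0 < a s)
    (hint : MeasureTheory.IntegrableOn
      (fun t : ℝ => Real.exp (-ρb * t) * pf (a (ηmax * t))) (Set.Ioi 0))
    (τM : ℝ → ℝ → ℝ)
    (hτ_eq : ∀ r ≥ (0:ℝ), ∀ x, a r < x → x - ηmax * τM r x = a (r + ηmax * τM r x))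
    (hτ_zero : ∀ r ≥ (0:ℝ), ∀ x, x ≤ a r → τM r x = 0)
    (w0 w1 : ℝ → ℝ → ℝ)
    (hw0 : ∀ r x : ℝ, w0 r x = pf x / ρb)
    (hw1 : ∀ r x : ℝ, w1 r x =
      (∫ t in Set.Ioc (0:ℝ) (τM r x), Real.exp (-ρb * t) * pf (x - ηmax * t)) +
      ∫ t in Set.Ioi (τM r x), Real.exp (-ρb * t) * pf (a (r + ηmax * t)))
    (b : ℝ → ℝ)
    (hb : ∀ r ≥ (0:ℝ), w0 r (b r) = w1 r (b r))
    (hb_ge : ∀ r ≥ (0:ℝ), a r ≤ b r)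
    (hB : ∀ r ≥ (0:ℝ), ∀ x, x < b r → w0 r x < w1 r x) :
    (∀ r ≥ (0:ℝ), pf (a r) / ρb <
      ∫ t in Set.Ioi (0:ℝ), Real.exp (-ρb * t) * pf (a (r + ηmax * t))) ∧
    (∀ r ≥ (0:ℝ), a r < b r) := by
  have key : ∀ r ≥ (0:ℝ), pf (a r) / ρb <
      ∫ t in Set.Ioi (0:ℝ), Real.exp (-ρb * t) * pf (a (r + ηmax * t)) := by
    intro r hr
    set c : ℝ := r / ηmax with hc
    have hc0 : 0 ≤ c := div_nonneg hr hη.le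
    -- rewrite the integrand as a shift of the integrable function from `hint`
    set f : ℝ → ℝ := fun t => Real.exp (-ρb * t) * pf (a (ηmax * t)) with hf
    have hrep : ∀ t : ℝ, Real.exp (-ρb * t) * pf (a (r + ηmax * t))
        = Real.exp (ρb * c) * f (t + c) := by
      intro t
      have h1 : ηmax * (t + c) = r + ηmax * t := by
        rw [hc, mul_add, ← mul_div_assoc, mul_div_cancel_left₀ r hη.ne']; ring
      simp only [hf, h1]
      rw [← mul_assoc, ← Real.exp_add]
      ring_nf
    -- integrability
    have hint_c : IntegrableOn f (Ioi c) := hint.mono_set (Ioi_subset_Ioi hc0)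
    have hpre : (fun t : ℝ => t + c) ⁻¹' (Ioi c) = Ioi (0:ℝ) := by
      ext t; simp
    have hshift : IntegrableOn (fun t => f (t + c)) (Ioi (0:ℝ)) := by
      have := (MeasureTheory.measurePreserving_add_right (volume : Measure ℝ)
          c).integrableOn_comp_preimage
          (MeasurableEquiv.addRight c).measurableEmbedding (f := f) (s := Ioi c)
      rw [hpre] at this
      exact this.mpr hint_c
    have hIg : IntegrableOn (fun t : ℝ => Real.exp (-ρb * t) * pf (a (r + ηmax * t)))
        (Ioi (0:ℝ)) := by
      have h2 : IntegrableOn (fun t => Real.exp (ρb * c) * f (t + c)) (Ioi (0:ℝ)) :=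
        hshift.const_mul (Real.exp (ρb * c))
      exact MeasureTheory.IntegrableOn.congr_fun h2 (fun t _ => (hrep t).symm) measurableSet_Ioi
    -- integrability of the constant comparison function
    have hIc : IntegrableOn (fun t : ℝ => Real.exp (-ρb * t) * pf (a r)) (Ioi (0:ℝ)) :=
      (exp_neg_integrableOn_Ioi 0 hρ).mul_const _
    -- value of the exponential integral
    have hexp : (∫ t in Ioi (0:ℝ), Real.exp (-ρb * t)) = 1 / ρb := by
      have := integral_comp_mul_left_Ioi (fun x => Real.exp (-x)) 0 hρ
      simp only [mul_zero, neg_mul] at this ⊢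
      rw [this, integral_exp_neg_Ioi, smul_eq_mul]
      simp [one_div]
    have hconst : (∫ t in Ioi (0:ℝ), Real.exp (-ρb * t) * pf (a r)) = pf (a r) / ρb := by
      rw [MeasureTheory.integral_mul_const, hexp]
      ring
    -- pointwise strict inequality on Ioi 0
    have hlt : ∀ t ∈ Ioi (0:ℝ),
        Real.exp (-ρb * t) * pf (a r) < Real.exp (-ρb * t) * pf (a (r + ηmax * t)) := by
      intro t ht
      have h1 : a r < a (r + ηmax * t) :=
        ha_mono (by nlinarith [mem_Ioi.mp ht])
      have h2 : pf (a r) < pf (a (r + ηmax * t)) :=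
        hpf_mono (ha_pos r).le (ha_pos _).le h1
      exact mul_lt_mul_of_pos_left h2 (Real.exp_pos _)
    -- conclude via positivity of the difference integral
    have hdiff : 0 < ∫ t in Ioi (0:ℝ),
        (Real.exp (-ρb * t) * pf (a (r + ηmax * t)) - Real.exp (-ρb * t) * pf (a r)) := by
      rw [MeasureTheory.setIntegral_pos_iff_support_of_nonneg_ae]
      · have : (Function.support fun t =>
            Real.exp (-ρb * t) * pf (a (r + ηmax * t)) - Real.exp (-ρb * t) * pf (a r))
            ∩ Ioi 0 = Ioi (0:ℝ) := by
          apply inter_eq_self_of_subset_right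
          intro t ht
          exact sub_ne_zero.mpr (ne_of_gt (hlt t ht))
        rw [this]
        simp
      · filter_upwards [MeasureTheory.ae_restrict_mem measurableSet_Ioi] with t ht
        exact sub_nonneg.mpr (hlt t ht).le
      · exact hIg.sub hIc
    have := MeasureTheory.integral_sub hIg hIc
    rw [this] at hdiff
    rw [hconst] at hdiff
    linarith
  refine ⟨key, ?_⟩
  intro r hr
  rcases lt_or_eq_of_le (hb_ge r hr) with h | h
  · exact h
  · exfalso
    have hτ0 : τM r (b r) = 0 := hτ_zero r hr (b r) (le_of_eq h.symm)
    have heq := hb r hr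
    rw [hw0, hw1, hτ0] at heq
    rw [← h] at heq
    have hIoc : (∫ t in Set.Ioc (0:ℝ) 0, Real.exp (-ρb * t) * pf (a r - ηmax * t)) = 0 := by
      simp
    rw [hIoc, zero_add] at heq
    have := key r hr
    rw [heq] at this
    exact lt_irrefl _ this
end

section
/- Let μ < 0, x > a(r), and h(r,x) = −η_max(∂_r w₁ − ∂_x w₁)(r,x) where (∂_r w₁ − ∂_x w₁)(r,x) = ∫_{τ_M}^∞ e^(-ρ̄t) π̇(a(r + η_max t)) ȧ(r + η_max t) dt − ∫₀^{τ_M} e^(-ρ̄t) π̇(Y_t[x − f_M(t)]) Y_t dt. Then lim_{x→∞} h(r,x) = η_max ∫₀^∞ e^(-ρ̄t) lim_{x→∞} π̇(Y_t[x − f_M(t)]) Y_t dt > 0. -/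
open Real Set MeasureTheory Filter

/-- If `f` is differentiable at `y` and nondecreasing to the right of `y`,
then `deriv f y ≥ 0`. -/
lemma aux_deriv_nonneg {f : ℝ → ℝ} {y : ℝ} (hf : DifferentiableAt ℝ f y)
    (hm : ∀ z, y ≤ z → f y ≤ f z) : 0 ≤ deriv f y := by
  have h := hf.hasDerivAt
  rw [hasDerivAt_iff_tendsto_slope] at h
  have hsub : Set.Ioi y ⊆ {y}ᶜ := fun z hz => Set.mem_compl_singleton_iff.2 (ne_of_gt hz)
  have h' : Filter.Tendsto (slope f y) (nhdsWithin y (Set.Ioi y)) (nhds (deriv f y)) :=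
    h.mono_left (nhdsWithin_mono y hsub)
  refine ge_of_tendsto h' ?_
  filter_upwards [self_mem_nhdsWithin] with z hz
  have hz' : (0:ℝ) < z - y := sub_pos.2 hz
  rw [slope_def_field]
  exact div_nonneg (sub_nonneg.2 (hm z (le_of_lt hz))) hz'.le

set_option maxHeartbeats 2000000 in
/-- μ < 0 case: as x → ∞, h(r,x) → η_max ∫₀^∞ e^(-ρ̄t) (lim_{y→∞} π̇(y)) e^(μt) dt > 0,
by monotone convergence applied to h = −η_max(∂_r w₁ − ∂_x w₁). -/
theorem stmt14 (μ ρb ηmax : ℝ) (hμ : μ < 0) (hρ : 0 < ρb) (hη : 0 < ηmax)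
    (pf a : ℝ → ℝ)
    (hpf : ContDiff ℝ 1 pf) (hpf_mono : StrictMonoOn pf (Set.Ici 0))
    (hpf'_mono : MonotoneOn (deriv pf) (Set.Ici 0))
    (Lpf : ℝ) (hLpf : 0 < Lpf)
    (hpf'_lim : Filter.Tendsto (deriv pf) Filter.atTop (nhds Lpf))
    (ha : ContDiff ℝ 1 a) (ha_mono : StrictMono a) (ha_pos : ∀ s, 0 < a s)
    (hint : MeasureTheory.IntegrableOn
      (fun t : ℝ => Real.exp (-ρb * t) * pf (a (ηmax * t))) (Set.Ioi 0))
    (fM : ℝ → ℝ)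
    (hf : ∀ t : ℝ, fM t = (ηmax / |μ|) * (Real.exp (|μ| * t) - 1))
    (τM : ℝ → ℝ → ℝ)
    (hτ_eq : ∀ r > (0:ℝ), ∀ x, a r < x →
      x - fM (τM r x) = Real.exp (|μ| * τM r x) * a (r + ηmax * τM r x))
    (hτ_lim : ∀ r > (0:ℝ), Filter.Tendsto (fun x => τM r x) Filter.atTop Filter.atTop)
    (h : ℝ → ℝ → ℝ)
    (hh : ∀ r > (0:ℝ), ∀ x, a r < x → h r x =
      -ηmax * ((∫ t in Set.Ioi (τM r x),
          Real.exp (-ρb * t) * deriv pf (a (r + ηmax * t)) * deriv a (r + ηmax * t)) -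
        ∫ t in Set.Ioc (0:ℝ) (τM r x),
          Real.exp (-ρb * t) * deriv pf (Real.exp (μ * t) * (x - fM t)) * Real.exp (μ * t))) :
    ∀ r > (0:ℝ),
      Filter.Tendsto (fun x => h r x) Filter.atTop
        (nhds (ηmax * ∫ t in Set.Ioi (0:ℝ), Real.exp (-ρb * t) * Lpf * Real.exp (μ * t))) ∧
      0 < ηmax * ∫ t in Set.Ioi (0:ℝ), Real.exp (-ρb * t) * Lpf * Real.exp (μ * t) := by
  intro r hr
  -- basic facts
  have hpfd : Differentiable ℝ pf := hpf.differentiable one_ne_zero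
  have had : Differentiable ℝ a := ha.differentiable one_ne_zero
  have hpf'c : Continuous (deriv pf) := hpf.continuous_deriv le_rfl
  have ha'c : Continuous (deriv a) := ha.continuous_deriv le_rfl
  have a'_nonneg : ∀ s, 0 ≤ deriv a s := fun s =>
    aux_deriv_nonneg (had s) (fun z hz => (ha_mono.monotone hz))
  have pf'_nonneg : ∀ y : ℝ, 0 < y → 0 ≤ deriv pf y := by
    intro y hy
    refine aux_deriv_nonneg (hpfd y) (fun z hz => ?_)
    exact hpf_mono.monotoneOn hy.le (hy.le.trans hz) hz
  have pf'_le : ∀ y : ℝ, 0 ≤ y → deriv pf y ≤ Lpf := by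
    intro y hy
    refine ge_of_tendsto hpf'_lim ?_
    filter_upwards [eventually_ge_atTop y] with z hz
    exact hpf'_mono hy (hy.trans hz) hz
  -- abbreviations (as plain functions, kept definitionally transparent)
  have hμabs : |μ| = -μ := abs_of_neg hμ
  -- continuity of the integrands
  have hinnerc : Continuous fun t : ℝ => r + ηmax * t := by continuity
  have hPc : Continuous fun t : ℝ => Real.exp (-ρb * t) * pf (a (r + ηmax * t)) := by
    exact (Real.continuous_exp.comp (by continuity)).mul
      (hpf.continuous.comp (ha.continuous.comp hinnerc))
  have hg1c : Continuous fun t : ℝ =>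
      Real.exp (-ρb * t) * deriv pf (a (r + ηmax * t)) * deriv a (r + ηmax * t) := by
    exact ((Real.continuous_exp.comp (by continuity)).mul
      (hpf'c.comp (ha.continuous.comp hinnerc))).mul (ha'c.comp hinnerc)
  have hg1nn : ∀ t : ℝ,
      0 ≤ Real.exp (-ρb * t) * deriv pf (a (r + ηmax * t)) * deriv a (r + ηmax * t) := by
    intro t
    exact mul_nonneg (mul_nonneg (Real.exp_pos _).le
      (pf'_nonneg _ (ha_pos _))) (a'_nonneg _)
  set c : ℝ := r / ηmax with hc_def
  have hc : 0 < c := div_pos hr hη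
  have hηc : ηmax * c = r := by rw [hc_def]; field_simp
  -- Step 1 : integrability of P t = exp(-ρb t) * pf (a (r + ηmax t)) on Ioi 0
  have hPQ : ∀ t : ℝ, ‖Real.exp (-ρb * t) * pf (a (r + ηmax * t))‖ =
      Real.exp (ρb * c) * ‖Real.exp (-ρb * (t + c)) * pf (a (ηmax * (t + c)))‖ := by
    intro t
    have harg : ηmax * (t + c) = r + ηmax * t := by
      rw [mul_add, hηc]; ring
    rw [harg, Real.norm_eq_abs, Real.norm_eq_abs, abs_mul, abs_mul,
      abs_of_pos (Real.exp_pos _), abs_of_pos (Real.exp_pos _), ← mul_assoc, ← Real.exp_add]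
    congr 2
    ring
  have hQK : (0:ℝ) ≤ ∫ t in Set.Ioi (0:ℝ), ‖Real.exp (-ρb * t) * pf (a (ηmax * t))‖ :=
    integral_nonneg fun t => norm_nonneg _
  have hPint : MeasureTheory.IntegrableOn
      (fun t : ℝ => Real.exp (-ρb * t) * pf (a (r + ηmax * t))) (Set.Ioi 0) := by
    refine integrableOn_Ioi_of_intervalIntegral_norm_bounded
      (Real.exp (ρb * c) * ∫ t in Set.Ioi (0:ℝ), ‖Real.exp (-ρb * t) * pf (a (ηmax * t))‖)
      0 (fun i => hPc.integrableOn_Ioc) tendsto_id ?_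
    filter_upwards [eventually_ge_atTop (0:ℝ)] with i hi
    have h1 : (∫ t in (0:ℝ)..(id i), ‖Real.exp (-ρb * t) * pf (a (r + ηmax * t))‖)
        = Real.exp (ρb * c) *
          ∫ t in (0:ℝ)..i, ‖Real.exp (-ρb * (t + c)) * pf (a (ηmax * (t + c)))‖ := by
      rw [← intervalIntegral.integral_const_mul]
      exact intervalIntegral.integral_congr fun t _ => hPQ t
    rw [h1]
    have h2 : (∫ t in (0:ℝ)..i, ‖Real.exp (-ρb * (t + c)) * pf (a (ηmax * (t + c)))‖)
        = ∫ t in c..(i + c), ‖Real.exp (-ρb * t) * pf (a (ηmax * t))‖ := by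
      have := intervalIntegral.integral_comp_add_right
        (fun t => ‖Real.exp (-ρb * t) * pf (a (ηmax * t))‖) c (a := (0:ℝ)) (b := i)
      rw [zero_add] at this
      exact this
    rw [h2]
    refine mul_le_mul_of_nonneg_left ?_ (Real.exp_pos _).le
    rw [intervalIntegral.integral_of_le (by linarith : c ≤ i + c)]
    refine setIntegral_mono_set hint.norm (ae_of_all _ fun t => norm_nonneg _) ?_
    exact HasSubset.Subset.eventuallyLE fun t ht => hc.trans ht.1
  -- K = total mass of |P|
  have hK0 : (0:ℝ) ≤ ∫ t in Set.Ioi (0:ℝ), ‖Real.exp (-ρb * t) * pf (a (r + ηmax * t))‖ :=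
    integral_nonneg fun t => norm_nonneg _
  set K : ℝ := ∫ t in Set.Ioi (0:ℝ), ‖Real.exp (-ρb * t) * pf (a (r + ηmax * t))‖ with hK_def
  -- Step 2 : a uniform bound P b ≤ exp ρb * K for b ≥ 0
  have hPb : ∀ b : ℝ, 0 ≤ b →
      Real.exp (-ρb * b) * pf (a (r + ηmax * b)) ≤ Real.exp ρb * K := by
    intro b hb
    by_cases hsign : pf (a (r + ηmax * b)) ≤ 0
    · have : Real.exp (-ρb * b) * pf (a (r + ηmax * b)) ≤ 0 :=
        mul_nonpos_of_nonneg_of_nonpos (Real.exp_pos _).le hsign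
      exact this.trans (mul_nonneg (Real.exp_pos _).le hK0)
    · push_neg at hsign
      have hlow : ∀ s ∈ Set.Ioc b (b + 1),
          Real.exp (-ρb * (b + 1)) * pf (a (r + ηmax * b)) ≤
            Real.exp (-ρb * s) * pf (a (r + ηmax * s)) := by
        intro s hs
        have h1 : Real.exp (-ρb * (b + 1)) ≤ Real.exp (-ρb * s) := by
          apply Real.exp_le_exp.2
          nlinarith [hs.2, hρ]
        have h2 : pf (a (r + ηmax * b)) ≤ pf (a (r + ηmax * s)) := by
          refine hpf_mono.monotoneOn (ha_pos _).le (ha_pos _).le ?_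
          exact (ha_mono.monotone (by nlinarith [hs.1, hη] : r + ηmax * b ≤ r + ηmax * s))
        exact mul_le_mul h1 h2 hsign.le (Real.exp_pos _).le
      have hmeas : MeasurableSet (Set.Ioc b (b + 1)) := measurableSet_Ioc
      have hvol : (volume (Set.Ioc b (b + 1))).toReal = 1 := by
        rw [Real.volume_Ioc]
        norm_num
      have hIb : MeasureTheory.IntegrableOn
          (fun t : ℝ => Real.exp (-ρb * t) * pf (a (r + ηmax * t))) (Set.Ioc b (b + 1)) :=
        hPc.integrableOn_Ioc
      have h3 := MeasureTheory.setIntegral_ge_of_const_le hmeas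
        (by rw [Real.volume_Ioc]; exact ENNReal.ofReal_ne_top) hlow hIb
      rw [measureReal_def, hvol, one_smul] at h3
      have h4 : (∫ t in Set.Ioc b (b + 1), Real.exp (-ρb * t) * pf (a (r + ηmax * t))) ≤ K := by
        calc (∫ t in Set.Ioc b (b + 1), Real.exp (-ρb * t) * pf (a (r + ηmax * t)))
            ≤ ∫ t in Set.Ioc b (b + 1), ‖Real.exp (-ρb * t) * pf (a (r + ηmax * t))‖ :=
              setIntegral_mono_on hIb hIb.norm hmeas fun t _ => le_abs_self _
          _ ≤ K := setIntegral_mono_set hPint.norm (ae_of_all _ fun t => norm_nonneg _)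
              (HasSubset.Subset.eventuallyLE fun t ht => lt_of_le_of_lt hb ht.1)
      have h5 : Real.exp (-ρb * (b + 1)) * pf (a (r + ηmax * b)) ≤ K := h3.trans h4
      have h6 : Real.exp (-ρb * b) = Real.exp ρb * Real.exp (-ρb * (b + 1)) := by
        rw [← Real.exp_add]; congr 1; ring
      rw [h6, mul_assoc]
      exact mul_le_mul_of_nonneg_left h5 (Real.exp_pos _).le
  -- Step 3 : FTC identity
  have hderiv : ∀ t : ℝ, HasDerivAt (fun t => Real.exp (-ρb * t) * pf (a (r + ηmax * t)))
      (-ρb * (Real.exp (-ρb * t) * pf (a (r + ηmax * t))) +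
        ηmax * (Real.exp (-ρb * t) * deriv pf (a (r + ηmax * t)) * deriv a (r + ηmax * t))) t := by
    intro t
    have h1 : HasDerivAt (fun t : ℝ => r + ηmax * t) ηmax t := by
      simpa using ((hasDerivAt_id t).const_mul ηmax).const_add r
    have h2 : HasDerivAt (fun t : ℝ => a (r + ηmax * t))
        (deriv a (r + ηmax * t) * ηmax) t := (had _).hasDerivAt.comp t h1
    have h3 : HasDerivAt (fun t : ℝ => pf (a (r + ηmax * t)))
        (deriv pf (a (r + ηmax * t)) * (deriv a (r + ηmax * t) * ηmax)) t :=
      (hpfd _).hasDerivAt.comp t h2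
    have h4 : HasDerivAt (fun t : ℝ => Real.exp (-ρb * t))
        (Real.exp (-ρb * t) * -ρb) t := by
      simpa using (((hasDerivAt_id t).const_mul (-ρb)).exp)
    have h5 := h4.mul h3
    exact h5.congr_deriv (by ring)
  have hkey : ∀ b : ℝ, ηmax * ∫ t in (0:ℝ)..b,
      Real.exp (-ρb * t) * deriv pf (a (r + ηmax * t)) * deriv a (r + ηmax * t)
      = Real.exp (-ρb * b) * pf (a (r + ηmax * b)) - Real.exp (-ρb * 0) * pf (a (r + ηmax * 0))
        + ρb * ∫ t in (0:ℝ)..b, Real.exp (-ρb * t) * pf (a (r + ηmax * t)) := by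
    intro b
    have hci : Continuous fun t : ℝ =>
        -ρb * (Real.exp (-ρb * t) * pf (a (r + ηmax * t))) +
          ηmax * (Real.exp (-ρb * t) * deriv pf (a (r + ηmax * t)) * deriv a (r + ηmax * t)) :=
      (continuous_const.mul hPc).add (continuous_const.mul hg1c)
    have hftc := intervalIntegral.integral_eq_sub_of_hasDerivAt
      (f := fun t => Real.exp (-ρb * t) * pf (a (r + ηmax * t)))
      (fun t _ => hderiv t) (hci.intervalIntegrable 0 b)
    rw [intervalIntegral.integral_add (f := fun t : ℝ =>
        -ρb * (Real.exp (-ρb * t) * pf (a (r + ηmax * t))))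
      (g := fun t : ℝ =>
        ηmax * (Real.exp (-ρb * t) * deriv pf (a (r + ηmax * t)) * deriv a (r + ηmax * t)))
      ((continuous_const.mul hPc).intervalIntegrable 0 b)
      ((continuous_const.mul hg1c).intervalIntegrable 0 b),
      intervalIntegral.integral_const_mul, intervalIntegral.integral_const_mul] at hftc
    beta_reduce at hftc
    linarith [hftc]
  -- Step 4 : integrability of g1 on Ioi 0
  have hPB : ∀ b : ℝ, 0 ≤ b →
      (∫ t in (0:ℝ)..b, Real.exp (-ρb * t) * pf (a (r + ηmax * t))) ≤ K := by
    intro b hb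
    rw [intervalIntegral.integral_of_le hb]
    calc (∫ t in Set.Ioc (0:ℝ) b, Real.exp (-ρb * t) * pf (a (r + ηmax * t)))
        ≤ ∫ t in Set.Ioc (0:ℝ) b, ‖Real.exp (-ρb * t) * pf (a (r + ηmax * t))‖ :=
          setIntegral_mono_on hPc.integrableOn_Ioc hPc.integrableOn_Ioc.norm
            measurableSet_Ioc fun t _ => le_abs_self _
      _ ≤ K := setIntegral_mono_set hPint.norm (ae_of_all _ fun t => norm_nonneg _)
          (HasSubset.Subset.eventuallyLE fun t ht => ht.1)
  have hg1int : MeasureTheory.IntegrableOn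
      (fun t : ℝ => Real.exp (-ρb * t) * deriv pf (a (r + ηmax * t)) * deriv a (r + ηmax * t))
      (Set.Ioi 0) := by
    refine integrableOn_Ioi_of_intervalIntegral_norm_bounded
      ((Real.exp ρb * K + |Real.exp (-ρb * 0) * pf (a (r + ηmax * 0))| + ρb * K) / ηmax)
      0 (fun i => hg1c.integrableOn_Ioc) tendsto_id ?_
    filter_upwards [eventually_ge_atTop (0:ℝ)] with i hi
    have hnorm : (∫ t in (0:ℝ)..(id i),
        ‖Real.exp (-ρb * t) * deriv pf (a (r + ηmax * t)) * deriv a (r + ηmax * t)‖)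
        = ∫ t in (0:ℝ)..i,
          Real.exp (-ρb * t) * deriv pf (a (r + ηmax * t)) * deriv a (r + ηmax * t) :=
      intervalIntegral.integral_congr fun t _ => by
        rw [Real.norm_eq_abs, abs_of_nonneg (hg1nn t)]
    rw [hnorm, le_div_iff₀ hη]
    have h1 := hkey i
    have h2 := hPb i hi
    have h3 := hPB i hi
    have h4 : -(Real.exp (-ρb * 0) * pf (a (r + ηmax * 0)))
        ≤ |Real.exp (-ρb * 0) * pf (a (r + ηmax * 0))| := neg_le_abs _
    nlinarith [hρ]
  -- Step 5 : tail of g1 tends to 0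
  have htail : Filter.Tendsto (fun τ => ∫ t in Set.Ioi τ,
      Real.exp (-ρb * t) * deriv pf (a (r + ηmax * t)) * deriv a (r + ηmax * t))
      Filter.atTop (nhds 0) := by
    have h1 := intervalIntegral_tendsto_integral_Ioi 0 hg1int tendsto_id
    have h2 : Filter.Tendsto (fun τ => (∫ t in Set.Ioi (0:ℝ),
        Real.exp (-ρb * t) * deriv pf (a (r + ηmax * t)) * deriv a (r + ηmax * t)) -
        ∫ t in (0:ℝ)..τ,
        Real.exp (-ρb * t) * deriv pf (a (r + ηmax * t)) * deriv a (r + ηmax * t))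
        Filter.atTop (nhds ((∫ t in Set.Ioi (0:ℝ),
        Real.exp (-ρb * t) * deriv pf (a (r + ηmax * t)) * deriv a (r + ηmax * t)) -
        ∫ t in Set.Ioi (0:ℝ),
        Real.exp (-ρb * t) * deriv pf (a (r + ηmax * t)) * deriv a (r + ηmax * t))) :=
      tendsto_const_nhds.sub h1
    rw [sub_self] at h2
    refine h2.congr' ?_
    filter_upwards [eventually_ge_atTop (0:ℝ)] with τ hτ
    have hsplit : (∫ t in Set.Ioi (0:ℝ),
        Real.exp (-ρb * t) * deriv pf (a (r + ηmax * t)) * deriv a (r + ηmax * t))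
        = (∫ t in Set.Ioc (0:ℝ) τ,
          Real.exp (-ρb * t) * deriv pf (a (r + ηmax * t)) * deriv a (r + ηmax * t)) +
          ∫ t in Set.Ioi τ,
          Real.exp (-ρb * t) * deriv pf (a (r + ηmax * t)) * deriv a (r + ηmax * t) := by
      rw [← MeasureTheory.setIntegral_union (Set.Ioc_disjoint_Ioi le_rfl) measurableSet_Ioi
        (hg1int.mono_set Set.Ioc_subset_Ioi_self)
        (hg1int.mono_set (Set.Ioi_subset_Ioi hτ)), Set.Ioc_union_Ioi_eq_Ioi hτ]
    rw [intervalIntegral.integral_of_le hτ]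
    linarith [hsplit]
  have hI1 : Filter.Tendsto (fun x => ∫ t in Set.Ioi (τM r x),
      Real.exp (-ρb * t) * deriv pf (a (r + ηmax * t)) * deriv a (r + ηmax * t))
      Filter.atTop (nhds 0) := htail.comp (hτ_lim r hr)
  -- Step 6 : the limit integral and its positivity
  have hbeq : (fun t : ℝ => Real.exp (-ρb * t) * Lpf * Real.exp (μ * t))
      = fun t : ℝ => Lpf * Real.exp (-(ρb - μ) * t) := by
    funext t
    rw [show -(ρb - μ) * t = -ρb * t + μ * t by ring, Real.exp_add]
    ring
  have hbound_int : MeasureTheory.IntegrableOn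
      (fun t : ℝ => Real.exp (-ρb * t) * Lpf * Real.exp (μ * t)) (Set.Ioi 0) := by
    rw [hbeq]
    exact (exp_neg_integrableOn_Ioi 0 (by linarith : (0:ℝ) < ρb - μ)).const_mul Lpf
  have hLpos : 0 < ∫ t in Set.Ioi (0:ℝ), Real.exp (-ρb * t) * Lpf * Real.exp (μ * t) := by
    refine (MeasureTheory.setIntegral_pos_iff_support_of_nonneg_ae
      (ae_of_all _ fun t => by positivity) hbound_int).2 ?_
    refine lt_of_lt_of_le ?_ (measure_mono (fun t ht =>
      ⟨Function.mem_support.2 (by positivity), ht⟩))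
    rw [Real.volume_Ioi]
    exact ENNReal.zero_lt_top
  -- Step 7 : dominated convergence for the second integral
  have hfM_mono : ∀ s t : ℝ, s ≤ t → fM s ≤ fM t := by
    intro s t hst
    rw [hf, hf]
    have hμ0 : (0:ℝ) < |μ| := abs_pos.2 (ne_of_lt hμ)
    have : Real.exp (|μ| * s) ≤ Real.exp (|μ| * t) :=
      Real.exp_le_exp.2 (mul_le_mul_of_nonneg_left hst hμ0.le)
    have hpos : (0:ℝ) ≤ ηmax / |μ| := div_nonneg hη.le hμ0.le
    exact mul_le_mul_of_nonneg_left (by linarith) hpos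
  have hz_pos : ∀ x, a r < x → ∀ t ∈ Set.Ioc (0:ℝ) (τM r x), 0 < x - fM t := by
    intro x hx t ht
    have h1 : fM t ≤ fM (τM r x) := hfM_mono _ _ ht.2
    have h2 := hτ_eq r hr x hx
    have h3 : 0 < Real.exp (|μ| * τM r x) * a (r + ηmax * τM r x) :=
      mul_pos (Real.exp_pos _) (ha_pos _)
    linarith
  have hfMc : Continuous fM := by
    have : fM = fun t => (ηmax / |μ|) * (Real.exp (|μ| * t) - 1) := funext hf
    rw [this]
    continuity
  have hGc : ∀ x : ℝ, Continuous fun t : ℝ =>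
      Real.exp (-ρb * t) * deriv pf (Real.exp (μ * t) * (x - fM t)) * Real.exp (μ * t) := by
    intro x
    have hz : Continuous fun t : ℝ => Real.exp (μ * t) * (x - fM t) :=
      (Real.continuous_exp.comp (by continuity)).mul (continuous_const.sub hfMc)
    exact ((Real.continuous_exp.comp (by continuity)).mul (hpf'c.comp hz)).mul
      (Real.continuous_exp.comp (by continuity))
  have hI2 : Filter.Tendsto (fun x => ∫ t in Set.Ioc (0:ℝ) (τM r x),
      Real.exp (-ρb * t) * deriv pf (Real.exp (μ * t) * (x - fM t)) * Real.exp (μ * t))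
      Filter.atTop
      (nhds (∫ t in Set.Ioi (0:ℝ), Real.exp (-ρb * t) * Lpf * Real.exp (μ * t))) := by
    have heqI : ∀ x : ℝ, (∫ t in Set.Ioi (0:ℝ), (Set.Ioc (0:ℝ) (τM r x)).indicator
        (fun t => Real.exp (-ρb * t) * deriv pf (Real.exp (μ * t) * (x - fM t)) *
          Real.exp (μ * t)) t)
        = ∫ t in Set.Ioc (0:ℝ) (τM r x),
          Real.exp (-ρb * t) * deriv pf (Real.exp (μ * t) * (x - fM t)) * Real.exp (μ * t) := by
      intro x
      rw [MeasureTheory.setIntegral_indicator measurableSet_Ioc,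
        Set.inter_eq_self_of_subset_right Set.Ioc_subset_Ioi_self]
    have hdct := MeasureTheory.tendsto_integral_filter_of_dominated_convergence
      (μ := volume.restrict (Set.Ioi (0:ℝ))) (l := (Filter.atTop : Filter ℝ))
      (F := fun x : ℝ => (Set.Ioc (0:ℝ) (τM r x)).indicator
        (fun t => Real.exp (-ρb * t) * deriv pf (Real.exp (μ * t) * (x - fM t)) *
          Real.exp (μ * t)))
      (f := fun t => Real.exp (-ρb * t) * Lpf * Real.exp (μ * t))
      (fun t : ℝ => Real.exp (-ρb * t) * Lpf * Real.exp (μ * t))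
      (Eventually.of_forall fun x =>
        ((hGc x).aestronglyMeasurable).indicator measurableSet_Ioc)
      ?_ hbound_int ?_
    · exact Filter.Tendsto.congr (fun x => heqI x) hdct
    · -- domination
      filter_upwards [eventually_gt_atTop (a r)] with x hx
      refine (MeasureTheory.ae_restrict_iff' measurableSet_Ioi).2 (ae_of_all _ fun t ht => ?_)
      by_cases hmem : t ∈ Set.Ioc (0:ℝ) (τM r x)
      · rw [Set.indicator_of_mem hmem]
        have hzpos : 0 < x - fM t := hz_pos x hx t hmem
        have hzz : 0 < Real.exp (μ * t) * (x - fM t) := mul_pos (Real.exp_pos _) hzpos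
        have h0 : 0 ≤ deriv pf (Real.exp (μ * t) * (x - fM t)) := pf'_nonneg _ hzz
        have h1 : deriv pf (Real.exp (μ * t) * (x - fM t)) ≤ Lpf := pf'_le _ hzz.le
        rw [Real.norm_eq_abs, abs_of_nonneg
          (mul_nonneg (mul_nonneg (Real.exp_pos _).le h0) (Real.exp_pos _).le)]
        exact mul_le_mul_of_nonneg_right
          (mul_le_mul_of_nonneg_left h1 (Real.exp_pos _).le) (Real.exp_pos _).le
      · rw [Set.indicator_of_notMem hmem]
        simpa using le_of_lt (by positivity :
          (0:ℝ) < Real.exp (-ρb * t) * Lpf * Real.exp (μ * t))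
    · -- pointwise limit
      refine (MeasureTheory.ae_restrict_iff' measurableSet_Ioi).2 (ae_of_all _ fun t ht => ?_)
      have hzt : Filter.Tendsto (fun x : ℝ => Real.exp (μ * t) * (x - fM t))
          Filter.atTop Filter.atTop := by
        refine Filter.Tendsto.const_mul_atTop (Real.exp_pos _) ?_
        exact tendsto_atTop_add_const_right _ (-fM t) tendsto_id |>.congr (fun x => by simp [sub_eq_add_neg])
      have hG : Filter.Tendsto (fun x : ℝ =>
          Real.exp (-ρb * t) * deriv pf (Real.exp (μ * t) * (x - fM t)) * Real.exp (μ * t))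
          Filter.atTop (nhds (Real.exp (-ρb * t) * Lpf * Real.exp (μ * t))) :=
        ((hpf'_lim.comp hzt).const_mul (Real.exp (-ρb * t))).mul_const (Real.exp (μ * t))
      refine hG.congr' ?_
      filter_upwards [(hτ_lim r hr).eventually (eventually_ge_atTop t)] with x hx
      rw [Set.indicator_of_mem (Set.mem_Ioc.mpr ⟨ht, hx⟩)]
  -- Step 8 : assembly
  constructor
  · have hmain := (hI1.sub hI2).const_mul (-ηmax)
    rw [show -ηmax * ((0:ℝ) - ∫ t in Set.Ioi (0:ℝ),
        Real.exp (-ρb * t) * Lpf * Real.exp (μ * t))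
      = ηmax * ∫ t in Set.Ioi (0:ℝ), Real.exp (-ρb * t) * Lpf * Real.exp (μ * t)
      from by ring] at hmain
    refine hmain.congr' ?_
    filter_upwards [eventually_gt_atTop (a r)] with x hx
    exact (hh r hr x hx).symm
  · exact mul_pos hη hLpos
end
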